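/- For x ∈ St(d,r), ξ ∈ T_x with ‖ξ‖_F ≤ 1, the polar retraction satisfies ‖Retr_x(ξ) − (x + ξ)‖_F ≤ ‖ξ‖_F². -/

import Mathlib

open Matrix BigOperators Finset
open scoped RealInnerProductSpace

noncomputable def fnorm {d r : ℕ} (A : Matrix (Fin d) (Fin r) ℝ) : ℝ :=
  Real.sqrt (∑ i, ∑ j, (A i j) ^ 2)

def ip {d r : ℕ} (A B : Matrix (Fin d) (Fin r) ℝ) : ℝ :=
  ∑ i, ∑ j, A i j * B i j

open scoped ComplexOrder in
/-- The positive semidefinite square root of a positive semidefinite matrix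
(the definition `Matrix.PosSemidef.sqrt` of the older Mathlib, removed since). -/
noncomputable def Matrix.PosSemidef.sqrt {n 𝕜 : Type*} [Fintype n] [DecidableEq n] [RCLike 𝕜]
    {A : Matrix n n 𝕜} (hA : Matrix.PosSemidef A) : Matrix n n 𝕜 :=
  hA.1.eigenvectorUnitary.1 * diagonal ((↑) ∘ (√·) ∘ hA.1.eigenvalues) *
  (star hA.1.eigenvectorUnitary : Matrix n n 𝕜)

def Stiefel (d r : ℕ) : Set (Matrix (Fin d) (Fin r) ℝ) :=
  {x | xᵀ * x = 1}

lemma fnorm_sq_eq_trace {d r : ℕ} (A : Matrix (Fin d) (Fin r) ℝ) :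
    fnorm A ^ 2 = (Aᵀ * A).trace := by
  have h : (Aᵀ * A).trace = ∑ i, ∑ j, (A i j) ^ 2 := by
    simp only [Matrix.trace, Matrix.diag, Matrix.mul_apply, Matrix.transpose_apply, sq]
    rw [Finset.sum_comm]
  rw [h, fnorm, Real.sq_sqrt]
  positivity

lemma fnorm_eq_sqrt_trace {d r : ℕ} (A : Matrix (Fin d) (Fin r) ℝ) :
    fnorm A = Real.sqrt (Aᵀ * A).trace := by
  rw [← fnorm_sq_eq_trace]
  exact (Real.sqrt_sq (Real.sqrt_nonneg _)).symm

lemma trace_unitary_conj {r : ℕ} (U : Matrix.unitaryGroup (Fin r) ℝ) (f : Fin r → ℝ) :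
    ((U : Matrix (Fin r) (Fin r) ℝ) * Matrix.diagonal f *
      (star U : Matrix (Fin r) (Fin r) ℝ)).trace = ∑ i, f i := by
  rw [Matrix.trace_mul_cycle, Matrix.mem_unitaryGroup_iff'.mp U.2, Matrix.one_mul,
    Matrix.trace_diagonal]

lemma Matrix.PosSemidef.sqrt_mul_self {n : Type*} [Fintype n] [DecidableEq n]
    {A : Matrix n n ℝ} (hA : A.PosSemidef) : hA.sqrt * hA.sqrt = A := by
  have hU := Matrix.mem_unitaryGroup_iff'.mp hA.1.eigenvectorUnitary.2
  have hD : diagonal ((↑) ∘ (√·) ∘ hA.1.eigenvalues) * diagonal ((↑) ∘ (√·) ∘ hA.1.eigenvalues)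
      = diagonal (RCLike.ofReal ∘ hA.1.eigenvalues : n → ℝ) := by
    rw [diagonal_mul_diagonal]
    congr 1
    funext i
    simp [Real.mul_self_sqrt (hA.eigenvalues_nonneg i)]
  conv_rhs => rw [hA.1.spectral_theorem, Unitary.conjStarAlgAut_apply]
  unfold Matrix.PosSemidef.sqrt
  rw [← hD]
  simp only [Matrix.mul_assoc]
  congr 2
  rw [← Matrix.mul_assoc (star _ : Matrix n n ℝ), hU, Matrix.one_mul]
  rfl

lemma Matrix.PosSemidef.posSemidef_sqrt {n : Type*} [Fintype n] [DecidableEq n]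
    {A : Matrix n n ℝ} (hA : A.PosSemidef) : hA.sqrt.PosSemidef := by
  unfold Matrix.PosSemidef.sqrt
  have h := (Matrix.posSemidef_diagonal_iff.mpr (fun i => by
    simp [Real.sqrt_nonneg] : ∀ i, (0 : ℝ) ≤ ((↑) ∘ (√·) ∘ hA.1.eigenvalues : n → ℝ) i)).conjTranspose_mul_mul_same
    (star hA.1.eigenvectorUnitary : Matrix n n ℝ)
  exact h

theorem stmt4 {d r : ℕ} (x ξ : Matrix (Fin d) (Fin r) ℝ)
    (hx : x ∈ Stiefel d r) (hξ : xᵀ * ξ + ξᵀ * x = 0)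
    (hsmall : fnorm ξ ≤ 1) :
    fnorm ((x + ξ) *
        (Matrix.PosSemidef.sqrt (Matrix.PosSemidef.add Matrix.PosSemidef.one (Matrix.posSemidef_conjTranspose_mul_self ξ)))⁻¹
        - (x + ξ))
      ≤ fnorm ξ ^ 2 := by
  classical
  set B : Matrix (Fin r) (Fin r) ℝ := ξᴴ * ξ with hB
  have hBpsd : B.PosSemidef := Matrix.posSemidef_conjTranspose_mul_self ξ
  set S : Matrix (Fin r) (Fin r) ℝ := 1 + B with hSdef
  have hS : S.PosSemidef :=
    Matrix.PosSemidef.add Matrix.PosSemidef.one (Matrix.posSemidef_conjTranspose_mul_self ξ)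
  set T : Matrix (Fin r) (Fin r) ℝ := hS.sqrt with hTdef
  have hST : T * T = S := hS.sqrt_mul_self
  have hTpsd : T.PosSemidef := hS.posSemidef_sqrt
  have hSpd : S.PosDef := Matrix.PosDef.add_posSemidef Matrix.PosDef.one hBpsd
  have hdet : IsUnit T.det := by
    have h2 : T.det * T.det = S.det := by rw [← Matrix.det_mul, hST]
    have := hSpd.det_pos
    have hne : T.det ≠ 0 := by
      intro h
      rw [h, mul_zero] at h2
      exact (lt_irrefl _ (h2 ▸ this))
    exact isUnit_iff_ne_zero.mpr hne
  have hTt : Tᵀ = T := by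
    have := hTpsd.isHermitian
    simpa [Matrix.IsHermitian] using this
  set ν : Fin r → ℝ := hS.1.eigenvalues with hν
  -- eigenvalues of S are ≥ 1
  have hν1 : ∀ i, 1 ≤ ν i := by
    intro i
    set v : Fin r → ℝ := ⇑(hS.1.eigenvectorBasis i) with hv
    have hvv : v ⬝ᵥ v = 1 := by
      have hn : ‖hS.1.eigenvectorBasis i‖ = 1 := hS.1.eigenvectorBasis.orthonormal.1 i
      rw [EuclideanSpace.norm_eq] at hn
      have hsum : ∑ j, v j ^ 2 = 1 := by
        have h := Real.sqrt_eq_one.mp hn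
        simpa [hv, Real.norm_eq_abs, sq_abs] using h
      simpa [dotProduct, sq] using hsum
    have heq := hS.1.eigenvalues_eq i
    have hmul : S *ᵥ v = v + B *ᵥ v := by
      rw [hSdef, Matrix.add_mulVec, Matrix.one_mulVec]
    have hBnn : 0 ≤ v ⬝ᵥ (B *ᵥ v) := by
      have := hBpsd.dotProduct_mulVec_nonneg v
      simpa using this
    have : ν i = v ⬝ᵥ v + v ⬝ᵥ (B *ᵥ v) := by
      rw [hν, heq]
      simp [hmul, dotProduct_add, ← hv]
    rw [this, hvv]
    linarith
  have hν0 : ∀ i, 0 ≤ ν i := fun i => le_trans zero_le_one (hν1 i)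
  -- traces
  have htrS : S.trace = ∑ i, ν i := by
    conv_lhs => rw [hS.1.spectral_theorem]
    have := trace_unitary_conj (hS.1.eigenvectorUnitary) (ν)
    simpa using this
  have htrT : T.trace = ∑ i, Real.sqrt (ν i) := by
    have hT : T = (hS.1.eigenvectorUnitary : Matrix (Fin r) (Fin r) ℝ) *
        Matrix.diagonal (Real.sqrt ∘ ν) *
        (star hS.1.eigenvectorUnitary : Matrix (Fin r) (Fin r) ℝ) := by
      rw [hTdef, Matrix.PosSemidef.sqrt]
      rfl
    rw [hT, trace_unitary_conj]
    rfl
  have htr1 : (1 : Matrix (Fin r) (Fin r) ℝ).trace = (r : ℝ) := by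
    simp [Matrix.trace_one]
  -- fnorm ξ ^ 2 = trace B
  have hfξ : fnorm ξ ^ 2 = ∑ i, (ν i - 1) := by
    have h1 : fnorm ξ ^ 2 = B.trace := by
      rw [fnorm_sq_eq_trace]
      congr 1
    have h2 : B.trace = S.trace - (1 : Matrix (Fin r) (Fin r) ℝ).trace := by
      rw [hSdef, Matrix.trace_add]; ring
    rw [h1, h2, htrS, htr1, Finset.sum_sub_distrib]
    simp [Finset.card_univ]
  -- the matrix C
  set A : Matrix (Fin d) (Fin r) ℝ := x + ξ with hA
  have hAtA : Aᵀ * A = S := by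
    have hx' : xᵀ * x = 1 := hx
    have hBt : ξᴴ * ξ = ξᵀ * ξ := by congr 1
    rw [hA, Matrix.transpose_add, Matrix.add_mul, Matrix.mul_add, Matrix.mul_add, hx',
      hSdef, hB, hBt]
    have h9 : 1 + xᵀ * ξ + (ξᵀ * x + ξᵀ * ξ) = 1 + ξᵀ * ξ + (xᵀ * ξ + ξᵀ * x) := by abel
    rw [h9, hξ, add_zero]
  set M : Matrix (Fin r) (Fin r) ℝ := T⁻¹ - 1 with hM
  have hMt : Mᵀ = M := by
    rw [hM, Matrix.transpose_sub, Matrix.transpose_one, Matrix.transpose_nonsing_inv, hTt]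
  have hTM : T * M = 1 - T := by
    rw [hM, Matrix.mul_sub, Matrix.mul_one, Matrix.mul_nonsing_inv T hdet]
  have hMT : M * T = 1 - T := by
    rw [hM, Matrix.sub_mul, Matrix.one_mul, Matrix.nonsing_inv_mul T hdet]
  have hC : A * T⁻¹ - A = A * M := by
    rw [hM, Matrix.mul_sub, Matrix.mul_one]
  have hCtC : (A * M)ᵀ * (A * M) = (1 - T) * (1 - T) := by
    rw [Matrix.transpose_mul, hMt, Matrix.mul_assoc, ← Matrix.mul_assoc Aᵀ A M, hAtA, ← hST]
    rw [Matrix.mul_assoc T T M, hTM, ← Matrix.mul_assoc M T (1 - T), hMT]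
  have hexp : ((1 - T) * (1 - T)).trace = ∑ i, (Real.sqrt (ν i) - 1) ^ 2 := by
    have h1 : (1 - T) * (1 - T) = 1 - T - T + T * T := by noncomm_ring
    rw [h1, Matrix.trace_add, Matrix.trace_sub, Matrix.trace_sub, hST, htrS, htrT, htr1]
    have : ∀ i : Fin r, (Real.sqrt (ν i) - 1) ^ 2 = ν i - 2 * Real.sqrt (ν i) + 1 := by
      intro i
      have := Real.sq_sqrt (hν0 i)
      nlinarith [this]
    rw [Finset.sum_congr rfl (fun i _ => this i), Finset.sum_add_distrib,
      Finset.sum_sub_distrib, ← Finset.mul_sum]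
    simp only [Finset.sum_const, Finset.card_univ, Fintype.card_fin, nsmul_eq_mul, mul_one]
    ring
  -- key inequality
  have hineq : ∑ i, (Real.sqrt (ν i) - 1) ^ 2 ≤ (∑ i, (ν i - 1)) ^ 2 := by
    have step1 : ∑ i, (Real.sqrt (ν i) - 1) ^ 2 ≤ ∑ i, (ν i - 1) ^ 2 := by
      apply Finset.sum_le_sum
      intro i _
      have h1 : 1 ≤ Real.sqrt (ν i) := by
        rw [show (1:ℝ) = Real.sqrt 1 by simp]
        exact Real.sqrt_le_sqrt (hν1 i)
      have h2 : Real.sqrt (ν i) ≤ ν i := by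
        nlinarith [Real.sq_sqrt (hν0 i), Real.sqrt_nonneg (ν i), hν1 i, h1]
      have h3 : 0 ≤ Real.sqrt (ν i) - 1 := by linarith
      have h4 : Real.sqrt (ν i) - 1 ≤ ν i - 1 := by linarith
      exact pow_le_pow_left₀ h3 h4 2
    have step2 : ∑ i, (ν i - 1) ^ 2 ≤ (∑ i, (ν i - 1)) ^ 2 :=
      Finset.sum_sq_le_sq_sum_of_nonneg (fun i _ => by linarith [hν1 i])
    linarith
  -- conclude
  have hKnn : 0 ≤ fnorm ξ ^ 2 := by positivity
  calc fnorm (A * T⁻¹ - A) = fnorm (A * M) := by rw [hC]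
    _ = Real.sqrt (((A * M)ᵀ * (A * M)).trace) := fnorm_eq_sqrt_trace _
    _ = Real.sqrt (∑ i, (Real.sqrt (ν i) - 1) ^ 2) := by rw [hCtC, hexp]
    _ ≤ Real.sqrt ((∑ i, (ν i - 1)) ^ 2) := Real.sqrt_le_sqrt hineq
    _ = ∑ i, (ν i - 1) := Real.sqrt_sq (Finset.sum_nonneg fun i _ => by linarith [hν1 i])
    _ = fnorm ξ ^ 2 := hfξ.symm
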